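/- arXiv:2605.22952 — 2 statements merged into one kernel-verified Lean document; each statement's English description precedes it below -/
import Mathlib

section
/- Let P and Q be probability distributions on a finite set Z with Q(z) > 0 for all z with positive mass, and let α = min{Q(z) : Q(z) > 0}. Then TVD(P,Q)^2 ≥ (α/2) · D_KL(P ‖ Q) (reverse Pinsker inequality), and consequently 2·TVD(P,Q)^2 ≥ α · D_KL(P ‖ Q). -/
open Finset Real

/-- Reverse Pinsker inequality: if `α` is the minimum positive mass of `Q`
and the support of `P` is contained in that of `Q`, then
`TVD(P,Q)^2 ≥ (α/2) · D_KL(P‖Q)`, hence `2·TVD(P,Q)^2 ≥ α · D_KL(P‖Q)`. -/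
theorem reverse_pinsker {Z : Type*} [Fintype Z] [DecidableEq Z]
    (P Q : Z → ℝ)
    (hP0 : ∀ z, 0 ≤ P z) (hQ0 : ∀ z, 0 ≤ Q z)
    (hP1 : ∑ z, P z = 1) (hQ1 : ∑ z, Q z = 1)
    (hsupp : ∀ z, 0 < P z → 0 < Q z)
    (α : ℝ)
    (hne : (Finset.univ.filter (fun z => 0 < Q z)).Nonempty)
    (hα : α = (Finset.univ.filter (fun z => 0 < Q z)).inf' hne Q) :
    ((1 / 2) * ∑ z, |P z - Q z|) ^ 2 ≥
        (α / 2) * ∑ z, (if P z = 0 then 0 else P z * Real.log (P z / Q z)) ∧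
    2 * ((1 / 2) * ∑ z, |P z - Q z|) ^ 2 ≥
        α * ∑ z, (if P z = 0 then 0 else P z * Real.log (P z / Q z)) := by
  set S : ℝ := ∑ z, |P z - Q z| with hS
  set KL : ℝ := ∑ z, (if P z = 0 then 0 else P z * Real.log (P z / Q z)) with hKL
  -- α is positive
  have hαpos : 0 < α := by
    obtain ⟨z0, hz0mem, hz0⟩ := Finset.exists_mem_eq_inf' hne Q
    rw [hα, hz0]
    exact (Finset.mem_filter.mp hz0mem).2
  have hαle : ∀ z, 0 < Q z → α ≤ Q z := by
    intro z hz
    rw [hα]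
    exact Finset.inf'_le Q (Finset.mem_filter.mpr ⟨Finset.mem_univ z, hz⟩)
  -- sum of differences is zero
  have hsum0 : ∑ z, (P z - Q z) = 0 := by
    rw [Finset.sum_sub_distrib, hP1, hQ1]; ring
  -- S is nonnegative
  have hSnn : 0 ≤ S := Finset.sum_nonneg fun z _ => abs_nonneg _
  -- each |P z - Q z| ≤ S / 2
  have hmax : ∀ z, |P z - Q z| ≤ S / 2 := by
    intro z
    have h1 : P z - Q z + ∑ w ∈ Finset.univ.erase z, (P w - Q w) = 0 := by
      have := Finset.sum_erase_add Finset.univ (fun w => P w - Q w) (Finset.mem_univ z)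
      linarith
    have h2 : |P z - Q z| = |∑ w ∈ Finset.univ.erase z, (P w - Q w)| := by
      have : P z - Q z = -(∑ w ∈ Finset.univ.erase z, (P w - Q w)) := by linarith
      rw [this, abs_neg]
    have h3 : |∑ w ∈ Finset.univ.erase z, (P w - Q w)| ≤
        ∑ w ∈ Finset.univ.erase z, |P w - Q w| :=
      Finset.abs_sum_le_sum_abs _ _
    have h4 : |P z - Q z| + ∑ w ∈ Finset.univ.erase z, |P w - Q w| = S := by
      have := Finset.sum_erase_add Finset.univ (fun w => |P w - Q w|) (Finset.mem_univ z)
      rw [hS]; linarith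
    linarith [h2 ▸ h3]
  -- KL ≤ sum of (P-Q)^2/Q
  have hKLchi : KL ≤ ∑ z, (P z - Q z) ^ 2 / Q z := by
    have key : ∀ z ∈ Finset.univ, (if P z = 0 then 0 else P z * Real.log (P z / Q z)) ≤
        (P z - Q z) ^ 2 / Q z + (P z - Q z) := by
      intro z _
      by_cases hPz : P z = 0
      · simp only [hPz, if_true]
        by_cases hQz : Q z = 0
        · simp [hQz]
        · have hQpos : 0 < Q z := lt_of_le_of_ne (hQ0 z) (Ne.symm hQz)
          have : (0 - Q z) ^ 2 / Q z = Q z := by field_simp; ring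
          rw [hPz] at *
          nlinarith
      · simp only [hPz, if_false]
        have hPpos : 0 < P z := lt_of_le_of_ne (hP0 z) (Ne.symm hPz)
        have hQpos : 0 < Q z := hsupp z hPpos
        have hlog : Real.log (P z / Q z) ≤ P z / Q z - 1 :=
          Real.log_le_sub_one_of_pos (div_pos hPpos hQpos)
        have h5 : P z * Real.log (P z / Q z) ≤ P z * (P z / Q z - 1) :=
          mul_le_mul_of_nonneg_left hlog (hP0 z)
        have h6 : P z * (P z / Q z - 1) = (P z - Q z) ^ 2 / Q z + (P z - Q z) := by
          field_simp; ring
        linarith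
    calc KL ≤ ∑ z, ((P z - Q z) ^ 2 / Q z + (P z - Q z)) := Finset.sum_le_sum key
      _ = ∑ z, (P z - Q z) ^ 2 / Q z + ∑ z, (P z - Q z) := Finset.sum_add_distrib
      _ = ∑ z, (P z - Q z) ^ 2 / Q z := by rw [hsum0]; ring
  -- sum of (P-Q)^2/Q ≤ (1/α) * sum of (P-Q)^2
  have hchi : ∑ z, (P z - Q z) ^ 2 / Q z ≤ (1 / α) * ∑ z, (P z - Q z) ^ 2 := by
    rw [Finset.mul_sum]
    apply Finset.sum_le_sum
    intro z _
    by_cases hQz : 0 < Q z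
    · rw [one_div, inv_mul_eq_div]
      exact div_le_div_of_nonneg_left (sq_nonneg _) hαpos (hαle z hQz)
    · have hQ0' : Q z = 0 := le_antisymm (not_lt.mp hQz) (hQ0 z)
      have hP0' : P z = 0 := by
        by_contra h
        exact hQz (hsupp z (lt_of_le_of_ne (hP0 z) (Ne.symm h)))
      simp [hQ0', hP0']
  -- sum of (P-Q)^2 ≤ (S/2) * S
  have hsq : ∑ z, (P z - Q z) ^ 2 ≤ (S / 2) * S := by
    calc ∑ z, (P z - Q z) ^ 2 = ∑ z, |P z - Q z| * |P z - Q z| := by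
          apply Finset.sum_congr rfl
          intro z _
          rw [← sq_abs, sq]
      _ ≤ ∑ z, (S / 2) * |P z - Q z| :=
          Finset.sum_le_sum fun z _ =>
            mul_le_mul_of_nonneg_right (hmax z) (abs_nonneg _)
      _ = (S / 2) * S := by rw [← Finset.mul_sum]
  -- combine
  have hmain : (α / 2) * KL ≤ ((1 / 2) * S) ^ 2 := by
    have h7 : KL ≤ (1 / α) * ((S / 2) * S) :=
      le_trans hKLchi (le_trans hchi
        (mul_le_mul_of_nonneg_left hsq (by positivity)))
    have h8 : (α / 2) * KL ≤ (α / 2) * ((1 / α) * ((S / 2) * S)) :=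
      mul_le_mul_of_nonneg_left h7 (by positivity)
    have h9 : (α / 2) * ((1 / α) * ((S / 2) * S)) = ((1 / 2) * S) ^ 2 := by
      field_simp
    linarith
  exact ⟨hmain, by linarith⟩
end

section
/- Let D and D' be multisets of size n over X × Y differing by replacing one pair. Let P_D, P_{D'} be the empirical joint distributions, and let P_D^X, P_D^Y (resp. for D') be the marginal empirical distributions. Then |TVD(P_{D'}, P_{D'}^X ⊗ P_{D'}^Y) − TVD(P_D, P_D^X ⊗ P_D^Y)| ≤ 3/n, where (P ⊗ Q)(x,y) = P(x)Q(y). -/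
open Finset

noncomputable section

/-- Empirical joint distribution of a multiset of pairs. -/
def empJoint {X Y : Type*} [DecidableEq X] [DecidableEq Y]
    (D : Multiset (X × Y)) (n : ℕ) (p : X × Y) : ℝ :=
  (D.count p : ℝ) / n

/-- Empirical marginal on `X`. -/
def empMargX {X Y : Type*} [Fintype Y] [DecidableEq X] [DecidableEq Y]
    (D : Multiset (X × Y)) (n : ℕ) (x : X) : ℝ :=
  ∑ y : Y, empJoint D n (x, y)

/-- Empirical marginal on `Y`. -/
def empMargY {X Y : Type*} [Fintype X] [DecidableEq X] [DecidableEq Y]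
    (D : Multiset (X × Y)) (n : ℕ) (y : Y) : ℝ :=
  ∑ x : X, empJoint D n (x, y)

/-- TVD between the empirical joint distribution and the product of its
marginals. -/
def tvdJointProd {X Y : Type*} [Fintype X] [Fintype Y] [DecidableEq X]
    [DecidableEq Y] (D : Multiset (X × Y)) (n : ℕ) : ℝ :=
  (1 / 2) * ∑ p : X × Y,
    |empJoint D n p - empMargX D n p.1 * empMargY D n p.2|

lemma sum_count_univ {α : Type*} [Fintype α] [DecidableEq α] (s : Multiset α) :
    ∑ a : α, (s.count a : ℝ) = (Multiset.card s : ℝ) := by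
  rw [← Multiset.toFinset_sum_count_eq s]
  push_cast
  refine (Finset.sum_subset (Finset.subset_univ _) ?_).symm
  intro x _ hx
  simp [Multiset.count_eq_zero_of_notMem (by simpa using hx)]

/-- Replacing one pair in a multiset of size `n` changes the TVD between the
empirical joint distribution and the product of its marginals by at most
`3/n`. -/
theorem tvd_joint_prod_sensitivity {X Y : Type*} [Fintype X] [Fintype Y]
    [DecidableEq X] [DecidableEq Y]
    (D D' : Multiset (X × Y)) (n : ℕ) (hn : 1 ≤ n)
    (hcard : Multiset.card D = n)
    (t' t'' : X × Y) (ht' : t' ∈ D)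
    (hD' : D' = (D.erase t') + {t''}) :
    |tvdJointProd D' n - tvdJointProd D n| ≤ 3 / n := by
  have hN : (0:ℝ) < n := by exact_mod_cast hn
  have hcard' : Multiset.card D' = n := by
    subst hD'
    rw [Multiset.card_add, Multiset.card_erase_of_mem ht', hcard]
    simp [Nat.sub_add_cancel hn]
  -- count formula
  have hcount : ∀ p : X × Y, (D'.count p : ℝ)
      = (D.count p : ℝ) - (if p = t' then 1 else 0) + (if p = t'' then 1 else 0) := by
    intro p
    subst hD'
    rw [Multiset.count_add, Multiset.count_singleton]
    by_cases h : p = t'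
    · subst h
      have h1 : 1 ≤ D.count p := Multiset.one_le_count_iff_mem.2 ht'
      rw [Multiset.count_erase_self, if_pos rfl]
      by_cases h2 : p = t''
      · rw [if_pos h2, if_pos h2]
        push_cast [Nat.cast_sub h1]
        ring
      · rw [if_neg h2, if_neg h2]
        push_cast [Nat.cast_sub h1]
        ring
    · rw [Multiset.count_erase_of_ne h]
      push_cast
      split_ifs <;> ring
  have hjoint : ∀ p : X × Y, empJoint D' n p
      = empJoint D n p + ((if p = t'' then (1:ℝ) else 0) - (if p = t' then 1 else 0)) / n := by
    intro p
    unfold empJoint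
    rw [hcount p]
    ring
  -- marginal formulas
  have hsumX : ∀ t : X × Y, ∀ x : X,
      (∑ y : Y, (if (x, y) = t then (1:ℝ) else 0)) = (if x = t.1 then 1 else 0) := by
    rintro ⟨a, b⟩ x
    simp only [Prod.mk.injEq, ite_and]
    by_cases h : x = a
    · simp [h]
    · simp [h]
  have hsumY : ∀ t : X × Y, ∀ y : Y,
      (∑ x : X, (if (x, y) = t then (1:ℝ) else 0)) = (if y = t.2 then 1 else 0) := by
    rintro ⟨a, b⟩ y
    simp only [Prod.mk.injEq, ite_and]
    by_cases h : y = b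
    · simp [h]
    · simp [h]
  have hmX : ∀ x : X, empMargX D' n x
      = empMargX D n x + ((if x = t''.1 then (1:ℝ) else 0) - (if x = t'.1 then 1 else 0)) / n := by
    intro x
    unfold empMargX
    simp only [hjoint]
    rw [Finset.sum_add_distrib, ← Finset.sum_div, Finset.sum_sub_distrib, hsumX, hsumX]
  have hmY : ∀ y : Y, empMargY D' n y
      = empMargY D n y + ((if y = t''.2 then (1:ℝ) else 0) - (if y = t'.2 then 1 else 0)) / n := by
    intro y
    unfold empMargY
    simp only [hjoint]
    rw [Finset.sum_add_distrib, ← Finset.sum_div, Finset.sum_sub_distrib, hsumY, hsumY]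
  -- abs of indicator difference
  have hind : ∀ (P Q : Prop) [Decidable P] [Decidable Q],
      |(if P then (1:ℝ) else 0) - (if Q then 1 else 0)|
        ≤ (if P then (1:ℝ) else 0) + (if Q then 1 else 0) := by
    intro P Q _ _
    split_ifs <;> norm_num
  -- L1 bounds
  have hA : ∑ p : X × Y, |empJoint D' n p - empJoint D n p| ≤ 2 / n := by
    have : ∀ p : X × Y, |empJoint D' n p - empJoint D n p|
        ≤ ((if p = t'' then (1:ℝ) else 0) + (if p = t' then 1 else 0)) / n := by
      intro p
      rw [hjoint p]
      rw [add_sub_cancel_left, abs_div, abs_of_pos hN]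
      exact div_le_div_of_nonneg_right (hind _ _) hN.le
    refine (Finset.sum_le_sum fun p _ => this p).trans ?_
    rw [← Finset.sum_div, Finset.sum_add_distrib]
    rw [Finset.sum_ite_eq' Finset.univ t'' (fun _ => (1:ℝ)),
        Finset.sum_ite_eq' Finset.univ t' (fun _ => (1:ℝ))]
    simp
    norm_num
  have hBX : ∑ x : X, |empMargX D' n x - empMargX D n x| ≤ 2 / n := by
    have : ∀ x : X, |empMargX D' n x - empMargX D n x|
        ≤ ((if x = t''.1 then (1:ℝ) else 0) + (if x = t'.1 then 1 else 0)) / n := by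
      intro x
      rw [hmX x, add_sub_cancel_left, abs_div, abs_of_pos hN]
      exact div_le_div_of_nonneg_right (hind _ _) hN.le
    refine (Finset.sum_le_sum fun x _ => this x).trans ?_
    rw [← Finset.sum_div, Finset.sum_add_distrib]
    rw [Finset.sum_ite_eq' Finset.univ t''.1 (fun _ => (1:ℝ)),
        Finset.sum_ite_eq' Finset.univ t'.1 (fun _ => (1:ℝ))]
    simp
    norm_num
  have hBY : ∑ y : Y, |empMargY D' n y - empMargY D n y| ≤ 2 / n := by
    have : ∀ y : Y, |empMargY D' n y - empMargY D n y|
        ≤ ((if y = t''.2 then (1:ℝ) else 0) + (if y = t'.2 then 1 else 0)) / n := by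
      intro y
      rw [hmY y, add_sub_cancel_left, abs_div, abs_of_pos hN]
      exact div_le_div_of_nonneg_right (hind _ _) hN.le
    refine (Finset.sum_le_sum fun y _ => this y).trans ?_
    rw [← Finset.sum_div, Finset.sum_add_distrib]
    rw [Finset.sum_ite_eq' Finset.univ t''.2 (fun _ => (1:ℝ)),
        Finset.sum_ite_eq' Finset.univ t'.2 (fun _ => (1:ℝ))]
    simp
    norm_num
  -- nonnegativity and normalization
  have hjnn : ∀ (E : Multiset (X × Y)) (p : X × Y), 0 ≤ empJoint E n p := fun E p =>
    div_nonneg (Nat.cast_nonneg _) (le_of_lt hN)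
  have hXnn : ∀ x : X, 0 ≤ empMargX D n x := fun x =>
    Finset.sum_nonneg fun y _ => hjnn D (x, y)
  have hY'nn : ∀ y : Y, 0 ≤ empMargY D' n y := fun y =>
    Finset.sum_nonneg fun x _ => hjnn D' (x, y)
  have hXsum : ∑ x : X, empMargX D n x = 1 := by
    unfold empMargX empJoint
    have e : ∑ p : X × Y, ((D.count p : ℝ)) / n
        = ∑ x : X, ∑ y : Y, ((D.count (x, y) : ℝ)) / n := Fintype.sum_prod_type _
    rw [← e, ← Finset.sum_div, sum_count_univ, hcard]
    field_simp
  have hY'sum : ∑ y : Y, empMargY D' n y = 1 := by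
    unfold empMargY empJoint
    have e : ∑ p : X × Y, ((D'.count p : ℝ)) / n
        = ∑ x : X, ∑ y : Y, ((D'.count (x, y) : ℝ)) / n := Fintype.sum_prod_type _
    rw [Finset.sum_comm, ← e, ← Finset.sum_div, sum_count_univ, hcard']
    field_simp
  -- product term bound
  have hprod : ∑ p : X × Y,
      |empMargX D' n p.1 * empMargY D' n p.2 - empMargX D n p.1 * empMargY D n p.2|
      ≤ 4 / n := by
    have hpt : ∀ p : X × Y,
        |empMargX D' n p.1 * empMargY D' n p.2 - empMargX D n p.1 * empMargY D n p.2|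
        ≤ |empMargX D' n p.1 - empMargX D n p.1| * empMargY D' n p.2
          + empMargX D n p.1 * |empMargY D' n p.2 - empMargY D n p.2| := by
      intro p
      have : empMargX D' n p.1 * empMargY D' n p.2 - empMargX D n p.1 * empMargY D n p.2
          = (empMargX D' n p.1 - empMargX D n p.1) * empMargY D' n p.2
            + empMargX D n p.1 * (empMargY D' n p.2 - empMargY D n p.2) := by ring
      rw [this]
      refine (abs_add_le _ _).trans ?_
      rw [abs_mul, abs_mul, abs_of_nonneg (hY'nn p.2), abs_of_nonneg (hXnn p.1)]
    refine (Finset.sum_le_sum fun p _ => hpt p).trans ?_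
    rw [Finset.sum_add_distrib]
    have h1 : ∑ p : X × Y, |empMargX D' n p.1 - empMargX D n p.1| * empMargY D' n p.2
        = (∑ x : X, |empMargX D' n x - empMargX D n x|) * ∑ y : Y, empMargY D' n y := by
      have e : ∑ p : X × Y, |empMargX D' n p.1 - empMargX D n p.1| * empMargY D' n p.2
          = ∑ x : X, ∑ y : Y, |empMargX D' n x - empMargX D n x| * empMargY D' n y :=
        Fintype.sum_prod_type _
      rw [e, Finset.sum_mul_sum]
    have h2 : ∑ p : X × Y, empMargX D n p.1 * |empMargY D' n p.2 - empMargY D n p.2|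
        = (∑ x : X, empMargX D n x) * ∑ y : Y, |empMargY D' n y - empMargY D n y| := by
      have e : ∑ p : X × Y, empMargX D n p.1 * |empMargY D' n p.2 - empMargY D n p.2|
          = ∑ x : X, ∑ y : Y, empMargX D n x * |empMargY D' n y - empMargY D n y| :=
        Fintype.sum_prod_type _
      rw [e, Finset.sum_mul_sum]
    rw [h1, h2, hY'sum, hXsum, mul_one, one_mul]
    have := add_le_add hBX hBY
    have h4 : (2:ℝ)/n + 2/n = 4/n := by ring
    linarith
  -- main estimate
  unfold tvdJointProd
  rw [← mul_sub, abs_mul]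
  have habs12 : |(1:ℝ)/2| = 1/2 := by norm_num
  rw [habs12]
  rw [← Finset.sum_sub_distrib]
  have hstep : |∑ p : X × Y,
      (|empJoint D' n p - empMargX D' n p.1 * empMargY D' n p.2|
        - |empJoint D n p - empMargX D n p.1 * empMargY D n p.2|)| ≤ 6 / n := by
    refine (Finset.abs_sum_le_sum_abs _ _).trans ?_
    have hpt : ∀ p : X × Y,
        |(|empJoint D' n p - empMargX D' n p.1 * empMargY D' n p.2|
          - |empJoint D n p - empMargX D n p.1 * empMargY D n p.2|)|
        ≤ |empJoint D' n p - empJoint D n p|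
          + |empMargX D' n p.1 * empMargY D' n p.2 - empMargX D n p.1 * empMargY D n p.2| := by
      intro p
      refine (abs_abs_sub_abs_le_abs_sub _ _).trans ?_
      have : empJoint D' n p - empMargX D' n p.1 * empMargY D' n p.2
          - (empJoint D n p - empMargX D n p.1 * empMargY D n p.2)
          = (empJoint D' n p - empJoint D n p)
            - (empMargX D' n p.1 * empMargY D' n p.2 - empMargX D n p.1 * empMargY D n p.2) := by
        ring
      rw [this]
      exact abs_sub _ _
    refine (Finset.sum_le_sum fun p _ => hpt p).trans ?_
    rw [Finset.sum_add_distrib]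
    have := add_le_add hA hprod
    have h6 : (2:ℝ)/n + 4/n = 6/n := by ring
    linarith
  calc (1:ℝ)/2 * |∑ p : X × Y,
      (|empJoint D' n p - empMargX D' n p.1 * empMargY D' n p.2|
        - |empJoint D n p - empMargX D n p.1 * empMargY D n p.2|)|
      ≤ 1/2 * (6 / n) := by
        exact mul_le_mul_of_nonneg_left hstep (by norm_num)
    _ = 3 / n := by ring

end
end
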